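/- For any integer k > 1, the greatest common divisor of the numbers C(2k+1, 2i) − C(2k+1, 2i−1), taken over 0 < i ≤ k, equals m_{2k+1} · m_{2k}, where m_j = p if j + 1 = p^s for some prime p and integer s > 0, and m_j = 1 otherwise. -/

import Mathlib

open Nat Finset

-- Lucas step
lemma lucas_step {p : ℕ} (hp : p.Prime) (n j : ℕ) :
    ((n.choose j : ℕ) : ZMod p) =
      ((n % p).choose (j % p) : ℕ) * (((n / p).choose (j / p) : ℕ) : ZMod p) := by
  haveI : Fact p.Prime := ⟨hp⟩
  have h := Choose.choose_modEq_choose_mod_mul_choose_div_nat (p := p) (n := n) (k := j)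
  have := (ZMod.natCast_eq_natCast_iff _ _ _).mpr h
  push_cast at this ⊢
  exact this

-- C(p-1, r) = (-1)^r
lemma choose_p_sub_one {p : ℕ} (hp : p.Prime) {r : ℕ} (hr : r ≤ p - 1) :
    ((p - 1).choose r : ZMod p) = (-1) ^ r := by
  haveI : Fact p.Prime := ⟨hp⟩
  induction r with
  | zero => simp
  | succ r ih =>
    have hr' : r ≤ p - 1 := le_of_lt (lt_of_lt_of_le (lt_add_one r) hr)
    have e := Nat.choose_succ_right_eq (p - 1) r
    have hcast : (((p - 1) - r : ℕ) : ZMod p) = (-1) - r := by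
      have h1 : r ≤ p - 1 := hr'
      have h2 : 1 ≤ p := hp.one_lt.le
      push_cast [Nat.cast_sub h1, Nat.cast_sub h2]
      simp
    have e' : ((p-1).choose (r+1) : ZMod p) * (r + 1) = ((p-1).choose r : ZMod p) * ((-1) - r) := by
      have := congrArg (fun m : ℕ => (m : ZMod p)) e
      push_cast at this
      rw [this, hcast]
    have hne : ((r : ZMod p) + 1) ≠ 0 := by
      have : ((r + 1 : ℕ) : ZMod p) ≠ 0 := by
        rw [Ne, ZMod.natCast_eq_zero_iff]
        intro hdvd
        have : p ≤ r + 1 := Nat.le_of_dvd (Nat.succ_pos r) hdvd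
        omega
      exact_mod_cast this
    apply mul_right_cancel₀ hne
    rw [e', ih hr']
    push_cast
    ring


-- L1 : C(p^s - 1, j) = (-1)^j  mod p
lemma choose_pow_sub_one {p : ℕ} (hp : p.Prime) (s : ℕ) :
    ∀ j, j ≤ p ^ s - 1 → ((p ^ s - 1).choose j : ZMod p) = (-1) ^ j := by
  haveI : Fact p.Prime := ⟨hp⟩
  have hp1 : 1 < p := hp.one_lt
  induction s with
  | zero =>
    intro j hj
    norm_num at hj
    subst hj
    simp
  | succ s ih =>
    intro j hj
    have hps : 1 ≤ p ^ s := Nat.one_le_pow _ _ hp.pos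
    have hpow : p ^ (s+1) = p ^ s * p := by ring
    have hpow' : p ^ (s+1) = p * p ^ s := by ring
    have hsubmul : p * (p ^ s - 1) = p * p ^ s - p * 1 := by rw [Nat.mul_sub]
    have hge : p * 1 ≤ p * p ^ s := Nat.mul_le_mul_left p hps
    have hkey : p ^ (s+1) - 1 = p * (p ^ s - 1) + (p - 1) := by omega
    have hmod : (p ^ (s+1) - 1) % p = p - 1 := by
      rw [hkey, Nat.mul_add_mod, Nat.mod_eq_of_lt (by omega)]
    have hdiv : (p ^ (s+1) - 1) / p = p ^ s - 1 := by
      rw [hkey, Nat.mul_add_div hp.pos, Nat.div_eq_of_lt (by omega)]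
      omega
    have hjd : j / p ≤ p ^ s - 1 := by
      calc j / p ≤ (p ^ (s+1) - 1) / p := Nat.div_le_div_right hj
        _ = p ^ s - 1 := hdiv
    have hjm : j % p ≤ p - 1 := by
      have := Nat.mod_lt j hp.pos
      omega
    rw [lucas_step hp, hmod, hdiv, choose_p_sub_one hp hjm, ih _ hjd]
    have hsplit : (-1 : ZMod p) ^ j = ((-1) ^ (j % p)) * ((-1) ^ (j / p)) := by
      conv_lhs => rw [← Nat.mod_add_div j p]
      rw [pow_add, pow_mul]
      congr 2
      exact neg_one_pow_char (ZMod p) p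
    rw [hsplit]

lemma mul_sub_one_mod_div {q M : ℕ} (hq : 1 < q) (hM : 1 ≤ M) :
    (q * M - 1) % q = q - 1 ∧ (q * M - 1) / q = M - 1 := by
  have h1 : q * (M - 1) = q * M - q * 1 := by rw [Nat.mul_sub]
  have h2 : q * 1 ≤ q * M := Nat.mul_le_mul_left q hM
  have hkey : q * M - 1 = q * (M - 1) + (q - 1) := by omega
  constructor
  · rw [hkey, Nat.mul_add_mod, Nat.mod_eq_of_lt (by omega)]
  · rw [hkey, Nat.mul_add_div (by omega), Nat.div_eq_of_lt (by omega)]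
    omega

-- C(q^a*m - 1, q^a) = m - 1  mod q
lemma choose_qam {q : ℕ} (hq : q.Prime) (a : ℕ) :
    ∀ m, 1 ≤ m → ((q ^ a * m - 1).choose (q ^ a) : ZMod q) = ((m - 1 : ℕ) : ZMod q) := by
  induction a with
  | zero =>
    intro m hm
    simp [Nat.choose_one_right]
  | succ a ih =>
    intro m hm
    have hqa : 1 ≤ q ^ a * m :=
      Nat.mul_pos (pow_pos hq.pos a) (by omega)
    have hrw : q ^ (a+1) * m = q * (q ^ a * m) := by ring
    have hmd := mul_sub_one_mod_div (M := q ^ a * m) hq.one_lt hqa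
    have hjm : q ^ (a+1) % q = 0 := by
      have : q ^ (a+1) = q * q ^ a := by ring
      rw [this]; exact Nat.mul_mod_right _ _
    have hjd : q ^ (a+1) / q = q ^ a := by
      have : q ^ (a+1) = q * q ^ a := by ring
      rw [this]; exact Nat.mul_div_cancel_left _ hq.pos
    rw [hrw, lucas_step hq, hmd.1, hmd.2, hjm, hjd, Nat.choose_zero_right, ih _ hm]
    simp

-- C(q^a*m - 1, q^a + 1) = -(m - 1)  mod q,  a ≥ 1
lemma choose_qam1 {q : ℕ} (hq : q.Prime) (a m : ℕ) (ha : 1 ≤ a) (hm : 1 ≤ m) :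
    ((q ^ a * m - 1).choose (q ^ a + 1) : ZMod q) = -((m - 1 : ℕ) : ZMod q) := by
  obtain ⟨a', rfl⟩ : ∃ a', a = a' + 1 := ⟨a - 1, by omega⟩
  have hqa : 1 ≤ q ^ a' * m :=
    Nat.mul_pos (pow_pos hq.pos a') (by omega)
  have hrw : q ^ (a'+1) * m = q * (q ^ a' * m) := by ring
  have hmd := mul_sub_one_mod_div (M := q ^ a' * m) hq.one_lt hqa
  have hj : q ^ (a'+1) + 1 = q * q ^ a' + 1 := by ring
  have hjm : (q * q ^ a' + 1) % q = 1 := by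
    rw [Nat.mul_add_mod, Nat.mod_eq_of_lt hq.one_lt]
  have hjd : (q * q ^ a' + 1) / q = q ^ a' := by
    rw [Nat.mul_add_div hq.pos, Nat.div_eq_of_lt hq.one_lt]
    omega
  rw [hrw, hj, lucas_step hq, hmd.1, hmd.2, hjm, hjd, Nat.choose_one_right,
    choose_qam hq a' m hm]
  have : ((q - 1 : ℕ) : ZMod q) = -1 := by
    rw [Nat.cast_sub hq.one_lt.le]
    simp
  rw [this]
  ring

-- ratio lemma
lemma ratio_lemma {M n x : ℕ} (hx : x + 2 ≤ n)
    (h0 : ((n.choose x : ℕ) : ZMod M) = 1) (h2 : ((n.choose (x+2) : ℕ) : ZMod M) = 1) :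
    ((n : ZMod M) - x) * ((n : ZMod M) - x - 1) = (x + 1) * (x + 2) := by
  have e1 := Nat.choose_succ_right_eq n x
  have e2 := Nat.choose_succ_right_eq n (x+1)
  have c1 : (n.choose (x+1) : ZMod M) * ((x : ZMod M) + 1) = ((n : ZMod M) - x) := by
    have := congrArg (fun m : ℕ => (m : ZMod M)) e1
    push_cast [Nat.cast_sub (by omega : x ≤ n)] at this
    rw [h0] at this
    rw [this]
    ring
  have c2 : ((x : ZMod M) + 2) = (n.choose (x+1) : ZMod M) * ((n : ZMod M) - x - 1) := by
    have := congrArg (fun m : ℕ => (m : ZMod M)) e2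
    push_cast [Nat.cast_sub (by omega : x + 1 ≤ n)] at this
    rw [h2] at this
    linear_combination this
  calc ((n : ZMod M) - x) * ((n : ZMod M) - x - 1)
      = ((n.choose (x+1) : ZMod M) * ((x : ZMod M) + 1)) * ((n : ZMod M) - x - 1) := by rw [c1]
    _ = ((x : ZMod M) + 1) * ((n.choose (x+1) : ZMod M) * ((n : ZMod M) - x - 1)) := by ring
    _ = (x + 1) * (x + 2) := by rw [← c2]

lemma four_mul_eq_zero {M n : ℕ} (hn : 4 ≤ n)
    (h0 : ((n.choose 2 : ℕ) : ZMod M) = 1) (h2 : ((n.choose 4 : ℕ) : ZMod M) = 1) :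
    (4 : ZMod M) * ((n : ZMod M) + 1) = 0 := by
  have hz : ((n.choose 0 : ℕ) : ZMod M) = 1 := by simp
  have r1 := ratio_lemma (M := M) (x := 0) (by omega) hz h0
  have r2 := ratio_lemma (M := M) (x := 2) (by omega) h0 h2
  push_cast at r1 r2
  linear_combination r1 - r2

-- all C(M, i) odd implies M+1 is a power of 2
lemma pow_two_of_all_odd : ∀ M : ℕ, (∀ i, i ≤ M → ((M.choose i : ℕ) : ZMod 2) = 1) →
    ∃ t : ℕ, M + 1 = 2 ^ t := by
  intro M
  induction M using Nat.strong_induction_on with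
  | _ M ih =>
    intro h
    rcases Nat.eq_zero_or_pos M with hM | hM
    · exact ⟨0, by simp [hM]⟩
    have hModd : M % 2 = 1 := by
      have h1 := h 1 hM
      rw [Nat.choose_one_right] at h1
      have : ¬ (M : ZMod 2) = 0 := by rw [h1]; decide
      rw [ZMod.natCast_eq_zero_iff] at this
      omega
    set M' := M / 2 with hM'
    have hM2 : M = 2 * M' + 1 := by omega
    have hlt : M' < M := by omega
    have h' : ∀ i, i ≤ M' → ((M'.choose i : ℕ) : ZMod 2) = 1 := by
      intro i hi
      have hle : 2 * i ≤ M := by omega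
      have := h (2 * i) hle
      rw [lucas_step Nat.prime_two] at this
      have e1 : M % 2 = 1 := hModd
      have e2 : (2 * i) % 2 = 0 := Nat.mul_mod_right 2 i
      have e3 : (2 * i) / 2 = i := Nat.mul_div_cancel_left i (by norm_num)
      have e4 : M / 2 = M' := rfl
      rw [e1, e2, e3, e4] at this
      simpa using this
    obtain ⟨t, ht⟩ := ih M' hlt h'
    exact ⟨t + 1, by omega⟩

open Classical in
/-- `mCoef j = p` if `j + 1 = p ^ s` for a prime `p` and `s > 0`, and `1` otherwise. -/
noncomputable def mCoef (j : ℕ) : ℕ :=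
  if h : ∃ p : ℕ, ∃ s : ℕ, p.Prime ∧ 0 < s ∧ j + 1 = p ^ s then h.choose else 1

lemma mCoef_eq {j p s : ℕ} (hp : p.Prime) (hs : 0 < s) (h : j + 1 = p ^ s) :
    mCoef j = p := by
  have hex : ∃ p : ℕ, ∃ s : ℕ, p.Prime ∧ 0 < s ∧ j + 1 = p ^ s := ⟨p, s, hp, hs, h⟩
  rw [mCoef, dif_pos hex]
  obtain ⟨s', hp', hs', h'⟩ := hex.choose_spec
  have hcs : hex.choose ^ s' = p ^ s := by rw [← h', ← h]
  have hdvd : hex.choose ∣ p ^ s := hcs ▸ dvd_pow_self _ (by omega : s' ≠ 0)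
  have := hp'.dvd_of_dvd_pow hdvd
  exact (Nat.prime_dvd_prime_iff_eq hp' hp).mp this

lemma mCoef_eq_one {j : ℕ} (h : ¬ ∃ p : ℕ, ∃ s : ℕ, p.Prime ∧ 0 < s ∧ j + 1 = p ^ s) :
    mCoef j = 1 := by
  rw [mCoef, dif_neg h]

-- gcd符号 helpers for casting
lemma finset_gcd_cast {ι : Type*} (s : Finset ι) (f : ι → ℕ) :
    s.gcd (fun i => (f i : ℤ)) = ((s.gcd f : ℕ) : ℤ) := by
  classical
  induction s using Finset.induction_on with
  | empty => simp
  | insert _ _ h ih =>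
    rw [Finset.gcd_insert, Finset.gcd_insert, ih, ← Int.coe_gcd, Int.gcd_natCast_natCast]
    rfl

section Converse

-- odd prime converse
lemma conv_odd {q : ℕ} (hk : 1 < k) (hq : q.Prime) (hq2 : q ≠ 2)
    (H : ∀ j, j % 2 = 0 → j ≤ 2 * k → (((2*k).choose j : ℕ) : ZMod q) = 1) :
    ∃ r, 1 ≤ r ∧ 2 * k + 1 = q ^ r := by
  haveI : Fact q.Prime := ⟨hq⟩
  have hq3 : 3 ≤ q := by have := hq.two_le; omega
  -- step 1 : q ∣ 2k+1
  have h4 := four_mul_eq_zero (M := q) (n := 2*k) (by omega)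
    (H 2 (by norm_num) (by omega)) (H 4 (by norm_num) (by omega))
  have hcast : ((4 * (2*k+1) : ℕ) : ZMod q) = 0 := by
    push_cast at h4 ⊢
    linear_combination h4
  rw [ZMod.natCast_eq_zero_iff] at hcast
  have hdvd : q ∣ 2 * k + 1 := by
    rcases (Nat.Prime.dvd_mul hq).mp hcast with h | h
    · exfalso
      have hq2' : q ∣ 2 := by
        have h4' : (4 : ℕ) = 2 ^ 2 := by norm_num
        exact hq.dvd_of_dvd_pow (h4' ▸ h)
      exact hq2 ((Nat.prime_dvd_prime_iff_eq hq Nat.prime_two).mp hq2')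
    · exact h
  set a := (2*k+1).factorization q with ha_def
  have ha : 0 < a := hq.factorization_pos_of_dvd (by omega) hdvd
  set m := ordCompl[q] (2*k+1) with hm_def
  have hsplit : q ^ a * m = 2*k+1 := Nat.ordProj_mul_ordCompl_eq_self (2*k+1) q
  have hqm : ¬ q ∣ m := Nat.not_dvd_ordCompl hq (by omega)
  have hm1 : 1 ≤ m := by
    rcases Nat.eq_zero_or_pos m with h | h
    · exfalso; rw [h] at hsplit; omega
    · exact h
  rcases eq_or_lt_of_le hm1 with hm | hm2
  · exact ⟨a, ha, by rw [← hsplit, ← hm]; ring⟩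
  -- m ≥ 2 : contradiction
  exfalso
  have hqa3 : 3 ≤ q ^ a := le_trans hq3 (Nat.le_self_pow (by omega) q)
  have hqaodd : q ^ a % 2 = 1 := Nat.odd_iff.mp ((hq.odd_of_ne_two hq2).pow)
  have hmul : q ^ a * 2 ≤ q ^ a * m := Nat.mul_le_mul_left _ (by omega)
  have hle : q ^ a + 1 ≤ 2 * k := by omega
  have happ := H (q ^ a + 1) (by omega) hle
  have h2k : 2 * k = q ^ a * m - 1 := by omega
  rw [h2k, choose_qam1 hq a m ha hm1] at happ
  have : ((m : ℕ) : ZMod q) = 0 := by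
    have hc : ((m - 1 : ℕ) : ZMod q) = (m : ZMod q) - 1 := by
      rw [Nat.cast_sub hm1]; simp
    rw [hc] at happ
    linear_combination -happ
  rw [ZMod.natCast_eq_zero_iff] at this
  exact hqm this

lemma conv_odd_sq {k q r : ℕ} (hk : 1 < k) (hq : q.Prime) (hq2 : q ≠ 2)
    (hr : 1 ≤ r) (hqr : 2 * k + 1 = q ^ r)
    (H : ∀ j, j % 2 = 0 → j ≤ 2 * k → (((2*k).choose j : ℕ) : ZMod (q^2)) = 1) :
    False := by
  haveI : Fact q.Prime := ⟨hq⟩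
  haveI : Fact (1 < q) := ⟨hq.one_lt⟩
  have hq3 : 3 ≤ q := by have := hq.two_le; omega
  rcases eq_or_lt_of_le hr with hr1 | hr2
  · -- r = 1
    have hqk : q = 2 * k + 1 := by rw [hqr, ← hr1]; ring
    have h4 := four_mul_eq_zero (M := q^2) (n := 2*k) (by omega)
      (H 2 (by norm_num) (by omega)) (H 4 (by norm_num) (by omega))
    have hcast : ((4 * (2*k+1) : ℕ) : ZMod (q^2)) = 0 := by
      push_cast at h4 ⊢
      linear_combination h4
    rw [ZMod.natCast_eq_zero_iff] at hcast
    rw [← hqk] at hcast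
    have hd4 : q ∣ 4 := by
      have hq0 : 0 < q := hq.pos
      have : q * q ∣ 4 * q := by rwa [pow_two] at hcast
      exact (Nat.mul_dvd_mul_iff_right hq0).mp this
    have hq2' : q ∣ 2 := by
      have h4' : (4 : ℕ) = 2 ^ 2 := by norm_num
      exact hq.dvd_of_dvd_pow (h4' ▸ hd4)
    exact hq2 ((Nat.prime_dvd_prime_iff_eq hq Nat.prime_two).mp hq2')
  · -- r ≥ 2
    set t := q ^ (r - 1) with ht_def
    have htq : q * t = q ^ r := by
      rw [ht_def, ← _root_.pow_succ']
      congr 1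
      omega
    have ht3 : 3 ≤ t := le_trans hq3 (Nat.le_self_pow (by omega) q)
    have htodd : t % 2 = 1 := Nat.odd_iff.mp ((hq.odd_of_ne_two hq2).pow)
    have hqdt : q ∣ t := dvd_pow_self q (by omega)
    have hn : 2 * k = q ^ r - 1 := by omega
    -- bounds
    have hmul : t * 2 ≤ t * (q - 1) := Nat.mul_le_mul_left _ (by omega)
    have hsub : t * (q - 1) = t * q - t * 1 := by rw [Nat.mul_sub]
    have hbound : t + 1 ≤ 2 * k := by
      have : q * t = q ^ r := htq
      have h1 : t * q = q * t := Nat.mul_comm _ _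
      omega
    have hA : (((2*k).choose (t-1) : ℕ) : ZMod (q^2)) = 1 := H (t-1) (by omega) (by omega)
    have hB : (((2*k).choose (t+1) : ℕ) : ZMod (q^2)) = 1 := H (t+1) (by omega) hbound
    -- Pascal and exact identities
    have hsucc : 2 * k + 1 = q ^ r := hqr
    have pascal1 : (q^r).choose t = (2*k).choose (t-1) + (2*k).choose t := by
      have e : t = (t - 1) + 1 := by omega
      calc (q^r).choose t = ((2*k) + 1).choose ((t-1)+1) := by rw [← hsucc, ← e]
        _ = (2*k).choose (t-1) + (2*k).choose ((t-1)+1) := Nat.choose_succ_succ' _ _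
        _ = (2*k).choose (t-1) + (2*k).choose t := by rw [← e]
    have pascal2 : (q^r).choose (t+1) = (2*k).choose t + (2*k).choose (t+1) := by
      calc (q^r).choose (t+1) = ((2*k) + 1).choose (t+1) := by rw [← hsucc]
        _ = (2*k).choose t + (2*k).choose (t+1) := Nat.choose_succ_succ' _ _
    have exact1 : q ^ r * ((2*k).choose (t-1)) = (q^r).choose t * t := by
      have e := Nat.add_one_mul_choose_eq (2*k) (t-1)
      have e'' : t - 1 + 1 = t := by omega
      rw [e''] at e
      rw [← hsucc]
      exact e
    have exact2 : q ^ r * ((2*k).choose t) = (q^r).choose (t+1) * (t+1) := by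
      have e := Nat.add_one_mul_choose_eq (2*k) t
      rw [← hsucc]
      exact e
    -- q^2 divides choose (q^r) (t+1)
    have hcop : Nat.Coprime (q ^ r) (t + 1) := by
      apply Nat.Coprime.pow_left
      rw [Nat.Prime.coprime_iff_not_dvd hq]
      intro hd
      have h1 : q ∣ 1 := by simpa using Nat.dvd_sub hd hqdt
      have := Nat.le_of_dvd one_pos h1
      omega
    have hdvd2 : q ^ 2 ∣ (q^r).choose (t+1) := by
      have hdr : q ^ r ∣ (q^r).choose (t+1) * (t+1) := ⟨_, exact2.symm⟩
      exact dvd_trans (pow_dvd_pow q hr2) (Nat.Coprime.dvd_of_dvd_mul_right hcop hdr)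
    -- deduce C(2k, t) ≡ -1
    have hCt : (((2*k).choose t : ℕ) : ZMod (q^2)) = -1 := by
      have h0 : (((q^r).choose (t+1) : ℕ) : ZMod (q^2)) = 0 := by
        rw [ZMod.natCast_eq_zero_iff]; exact hdvd2
      have := congrArg (fun m : ℕ => (m : ZMod (q^2))) pascal2
      push_cast at this
      rw [h0, hB] at this
      linear_combination -this
    -- deduce q^2 ∣ choose (q^r) t
    have hdvd1 : q ^ 2 ∣ (q^r).choose t := by
      rw [← ZMod.natCast_eq_zero_iff]
      have := congrArg (fun m : ℕ => (m : ZMod (q^2))) pascal1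
      push_cast at this
      rw [hA, hCt] at this
      rw [this]
      ring
    -- contradiction via valuation
    have hdvd3 : q ^ r * q ∣ q ^ r * ((2*k).choose (t-1)) := by
      obtain ⟨d, hd⟩ := hdvd1
      refine ⟨d, ?_⟩
      rw [exact1, hd, ht_def]
      have hpow2 : q ^ 2 * q ^ (r-1) = q ^ r * q := by
        rw [← pow_add, ← pow_succ]
        congr 1
        omega
      calc q ^ 2 * d * q ^ (r-1) = (q ^ 2 * q ^ (r-1)) * d := by ring
        _ = q ^ r * q * d := by rw [hpow2]
    have hq_dvd : q ∣ (2*k).choose (t-1) := by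
      have hpos : 0 < q ^ r := pow_pos hq.pos r
      exact (Nat.mul_dvd_mul_iff_left hpos).mp hdvd3
    have hL1 : (((2*k).choose (t-1) : ℕ) : ZMod q) = 1 := by
      have := choose_pow_sub_one hq r (t-1) (by omega)
      rw [← hn] at this
      rw [this]
      have : (t - 1) % 2 = 0 := by omega
      rw [← Nat.div_add_mod (t-1) 2, this]
      rw [pow_add, pow_mul]
      norm_num
    rw [← ZMod.natCast_eq_zero_iff] at hq_dvd
    rw [hq_dvd] at hL1
    exact zero_ne_one hL1

lemma conv_two {k : ℕ} (hk : 1 < k)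
    (H : ∀ j, j % 2 = 0 → j ≤ 2 * k → (((2*k).choose j : ℕ) : ZMod 2) = 1) :
    ∃ s, 3 ≤ s ∧ 2 * k + 2 = 2 ^ s := by
  have hall : ∀ i, i ≤ k → ((k.choose i : ℕ) : ZMod 2) = 1 := by
    intro i hi
    have := H (2 * i) (by omega) (by omega)
    rw [lucas_step Nat.prime_two] at this
    have e1 : (2 * k) % 2 = 0 := by omega
    have e2 : (2 * i) % 2 = 0 := by omega
    have e3 : (2 * k) / 2 = k := by omega
    have e4 : (2 * i) / 2 = i := by omega
    rw [e1, e2, e3, e4] at this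
    simpa using this
  obtain ⟨t, ht⟩ := pow_two_of_all_odd k hall
  refine ⟨t + 1, ?_, by omega⟩
  have : 2 ^ t = k + 1 := ht.symm
  have h2 : 3 ≤ k + 1 := by omega
  rcases Nat.lt_or_ge t 2 with h | h
  · interval_cases t <;> omega
  · omega

lemma conv_two_sq {k s : ℕ} (hk : 1 < k) (hs : 3 ≤ s) (hpow : 2 * k + 2 = 2 ^ s)
    (H : ∀ j, j % 2 = 0 → j ≤ 2 * k → (((2*k).choose j : ℕ) : ZMod 4) = 1) :
    False := by
  have h2 := H 2 (by norm_num) (by omega)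
  have hval : (2*k).choose 2 = k * (2 * k - 1) := by
    rw [Nat.choose_two_right]
    have e1 : 2 * k * (2 * k - 1) = 2 * (k * (2 * k - 1)) := by ring
    rw [e1, Nat.mul_div_cancel_left _ (by norm_num)]
  rw [hval] at h2
  -- k = 2^(s-1) - 1
  have hsplit : 2 ^ s = 2 * 2 ^ (s - 1) := by
    rw [← _root_.pow_succ']
    congr 1
    omega
  have hkval : k = 2 ^ (s-1) - 1 := by omega
  have hdvd : (4 : ℕ) ∣ 2 ^ (s - 1) := by
    have : (4 : ℕ) = 2 ^ 2 := by norm_num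
    rw [this]
    exact pow_dvd_pow 2 (by omega)
  have hps : 1 ≤ 2 ^ (s-1) := Nat.one_le_pow _ _ (by norm_num)
  have hkc : ((k : ℕ) : ZMod 4) = -1 := by
    rw [hkval, Nat.cast_sub hps]
    rw [(ZMod.natCast_eq_zero_iff _ _).mpr hdvd]
    ring
  have hk1 : ((2 * k - 1 : ℕ) : ZMod 4) = 1 := by
    have : (((2 * k - 1) : ℕ) : ZMod 4) = 2 * (k : ZMod 4) - 1 := by
      rw [Nat.cast_sub (by omega : 1 ≤ 2 * k)]
      push_cast
      ring
    rw [this, hkc]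
    decide
  have : ((k * (2 * k - 1) : ℕ) : ZMod 4) = -1 := by
    push_cast
    rw [hk1]
    have : ((k : ℕ) : ZMod 4) = -1 := hkc
    rw [this]
    ring
  rw [h2] at this
  revert this
  decide

end Converse

-- forward direction helpers
lemma zmod_one_of_dvd_sub_one {M C : ℕ} (hC : 0 < C) (h : M ∣ C - 1) :
    ((C : ℕ) : ZMod M) = 1 := by
  have := (ZMod.natCast_eq_zero_iff (C - 1) M).mpr h
  rw [Nat.cast_sub hC] at this
  have := sub_eq_zero.mp this
  simpa using this

lemma dvd_sub_one_of_zmod_one {M C : ℕ} (hC : 0 < C) (h : ((C : ℕ) : ZMod M) = 1) :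
    M ∣ C - 1 := by
  rw [← ZMod.natCast_eq_zero_iff, Nat.cast_sub hC, h]
  simp

lemma fwd_odd {k q r : ℕ} (hq : q.Prime) (hqr : 2 * k + 1 = q ^ r) (i : ℕ) (hi : i ≤ k) :
    q ∣ (2*k).choose (2*i) - 1 := by
  apply dvd_sub_one_of_zmod_one (Nat.choose_pos (by omega))
  have h := choose_pow_sub_one hq r (2*i) (by omega)
  have e : q ^ r - 1 = 2 * k := by omega
  rw [e] at h
  rw [h, pow_mul]
  norm_num

lemma fwd_two {k s : ℕ} (hk : 1 < k) (hs : 3 ≤ s) (hpow : 2 * k + 2 = 2 ^ s)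
    (i : ℕ) (hi : i ≤ k) :
    2 ∣ (2*k).choose (2*i) - 1 := by
  apply dvd_sub_one_of_zmod_one (Nat.choose_pos (by omega))
  rw [lucas_step Nat.prime_two]
  have e1 : (2 * k) % 2 = 0 := by omega
  have e2 : (2 * i) % 2 = 0 := by omega
  have e3 : (2 * k) / 2 = k := by omega
  have e4 : (2 * i) / 2 = i := by omega
  rw [e1, e2, e3, e4]
  have hsplit : 2 ^ s = 2 * 2 ^ (s - 1) := by
    rw [← _root_.pow_succ']
    congr 1
    omega
  have hkval : k = 2 ^ (s-1) - 1 := by omega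
  have h := choose_pow_sub_one Nat.prime_two (s-1) i (by omega)
  rw [← hkval] at h
  rw [h]
  have : (-1 : ZMod 2) = 1 := rfl
  rw [this]
  simp

lemma nat_gcd_value {k : ℕ} (hk : 1 < k) :
    (Finset.Icc 1 k).gcd (fun i => (2*k).choose (2*i) - 1) = mCoef (2*k+1) * mCoef (2*k) := by
  set g := (Finset.Icc 1 k).gcd (fun i => (2*k).choose (2*i) - 1) with hg_def
  -- extraction of congruences
  have hH : ∀ M : ℕ, M ∣ g → ∀ j, j % 2 = 0 → j ≤ 2 * k →
      (((2*k).choose j : ℕ) : ZMod M) = 1 := by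
    intro M hM j hj hjle
    rcases Nat.eq_zero_or_pos j with h0 | hpos
    · subst h0; simp
    have hij : j = 2 * (j / 2) := by omega
    have hmem : j / 2 ∈ Finset.Icc 1 k := by
      rw [Finset.mem_Icc]; omega
    have hdvd : g ∣ (2*k).choose (2 * (j/2)) - 1 := Finset.gcd_dvd hmem
    have := dvd_trans hM hdvd
    rw [← hij] at this
    exact zmod_one_of_dvd_sub_one (Nat.choose_pos (by omega)) this
  -- g ≠ 0
  have hc1pos : 0 < (2*k).choose (2*1) - 1 := by
    have h6 : (4 : ℕ).choose 2 ≤ (2*k).choose 2 := Nat.choose_le_choose 2 (by omega)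
    have : (4 : ℕ).choose 2 = 6 := by decide
    have e : 2 * 1 = 2 := by norm_num
    rw [e]
    omega
  have hg0 : g ≠ 0 := by
    intro h
    have hdvd : g ∣ (2*k).choose (2*1) - 1 :=
      Finset.gcd_dvd (by rw [Finset.mem_Icc]; omega)
    rw [h] at hdvd
    rw [zero_dvd_iff] at hdvd
    omega
  -- key converse fact
  have key : ∀ p : ℕ, p.Prime → p ∣ g → p ∣ mCoef (2*k+1) * mCoef (2*k) ∧ ¬ (p^2 ∣ g) := by
    intro p hp hpg
    by_cases hp2 : p = 2
    · subst hp2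
      obtain ⟨s, hs3, hpow⟩ := conv_two hk (hH 2 hpg)
      have hE : mCoef (2*k+1) = 2 :=
        mCoef_eq Nat.prime_two (by omega : 0 < s) (by omega : (2*k+1) + 1 = 2 ^ s)
      constructor
      · rw [hE]; exact Dvd.intro _ rfl
      · intro h4
        have h4' : (4 : ℕ) ∣ g := by norm_num at h4 ⊢; exact h4
        exact conv_two_sq hk hs3 hpow (by
          intro j hj hjle
          have := hH 4 h4' j hj hjle
          exact this)
    · obtain ⟨r, hr, hqr⟩ := conv_odd hk hp hp2 (hH p hpg)
      have hF : mCoef (2*k) = p := mCoef_eq hp (by omega : 0 < r) (by omega : (2*k) + 1 = p ^ r)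
      constructor
      · rw [hF]; exact Dvd.intro_left _ rfl
      · intro hsq
        exact conv_odd_sq hk hp hp2 hr hqr (hH (p^2) hsq)
  -- E * F ≠ 0 and divisibility g ∣ E * F
  set E := mCoef (2*k+1) with hE_def
  set F := mCoef (2*k) with hF_def
  have hEF0 : E * F ≠ 0 := by
    apply Nat.mul_ne_zero
    · by_cases h : ∃ p : ℕ, ∃ s : ℕ, p.Prime ∧ 0 < s ∧ (2*k+1) + 1 = p ^ s
      · obtain ⟨p, s, hp, hs, hps⟩ := h
        rw [hE_def, mCoef_eq hp hs hps]
        exact hp.pos.ne'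
      · rw [hE_def, mCoef_eq_one h]; norm_num
    · by_cases h : ∃ p : ℕ, ∃ s : ℕ, p.Prime ∧ 0 < s ∧ (2*k) + 1 = p ^ s
      · obtain ⟨p, s, hp, hs, hps⟩ := h
        rw [hF_def, mCoef_eq hp hs hps]
        exact hp.pos.ne'
      · rw [hF_def, mCoef_eq_one h]; norm_num
  have hdir1 : g ∣ E * F := by
    rw [← Nat.factorization_le_iff_dvd hg0 hEF0, Finsupp.le_def]
    intro p
    by_cases hp : p.Prime
    · rcases Nat.eq_zero_or_pos (g.factorization p) with h0 | hpos
      · rw [h0]; exact Nat.zero_le _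
      · have hpg : p ∣ g := Nat.dvd_of_factorization_pos hpos.ne'
        obtain ⟨hpEF, hnsq⟩ := key p hp hpg
        have hle1 : g.factorization p ≤ 1 := by
          by_contra hgt
          exact hnsq ((Nat.Prime.pow_dvd_iff_le_factorization hp hg0).mpr (by omega))
        have hge1 : 1 ≤ (E * F).factorization p := by
          rw [← Nat.Prime.pow_dvd_iff_le_factorization hp hEF0, pow_one]
          exact hpEF
        omega
    · rw [Nat.factorization_eq_zero_of_not_prime g hp]
      exact Nat.zero_le _
  -- E * F ∣ g
  have hdir2 : E * F ∣ g := by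
    have hEg : E ∣ g := by
      by_cases h : ∃ p : ℕ, ∃ s : ℕ, p.Prime ∧ 0 < s ∧ (2*k+1) + 1 = p ^ s
      · obtain ⟨p, s, hp, hs, hps⟩ := h
        have hp2 : p = 2 := by
          have h2 : (2 : ℕ) ∣ p ^ s := by rw [← hps]; omega
          exact ((Nat.prime_dvd_prime_iff_eq Nat.prime_two hp).mp
            (Nat.prime_two.dvd_of_dvd_pow h2)).symm
        subst hp2
        have hs3 : 3 ≤ s := by
          have h1 : (6 : ℕ) ≤ 2 ^ s := by omega
          by_contra hlt
          interval_cases s <;> omega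
        rw [hE_def, mCoef_eq Nat.prime_two hs hps]
        apply Finset.dvd_gcd
        intro i hi
        rw [Finset.mem_Icc] at hi
        exact fwd_two hk hs3 (by omega) i hi.2
      · rw [hE_def, mCoef_eq_one h]
        exact one_dvd _
    have hFg : F ∣ g := by
      by_cases h : ∃ p : ℕ, ∃ s : ℕ, p.Prime ∧ 0 < s ∧ (2*k) + 1 = p ^ s
      · obtain ⟨p, s, hp, hs, hps⟩ := h
        rw [hF_def, mCoef_eq hp hs hps]
        apply Finset.dvd_gcd
        intro i hi
        rw [Finset.mem_Icc] at hi
        exact fwd_odd hp hps i hi.2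
      · rw [hF_def, mCoef_eq_one h]
        exact one_dvd _
    have hco : Nat.Coprime E F := by
      by_cases hA : ∃ p : ℕ, ∃ s : ℕ, p.Prime ∧ 0 < s ∧ (2*k+1) + 1 = p ^ s
      · by_cases hB : ∃ p : ℕ, ∃ s : ℕ, p.Prime ∧ 0 < s ∧ (2*k) + 1 = p ^ s
        · obtain ⟨p, s, hp, hs, hps⟩ := hA
          obtain ⟨q, r, hq, hr, hqr⟩ := hB
          have hp2 : p = 2 := by
            have h2 : (2 : ℕ) ∣ p ^ s := by rw [← hps]; omega
            exact ((Nat.prime_dvd_prime_iff_eq Nat.prime_two hp).mp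
              (Nat.prime_two.dvd_of_dvd_pow h2)).symm
          have hq2 : q ≠ 2 := by
            intro hq2
            subst hq2
            have : (2 : ℕ) ∣ 2 ^ r := dvd_pow_self 2 hr.ne'
            rw [← hqr] at this
            omega
          subst hp2
          rw [hE_def, hF_def, mCoef_eq Nat.prime_two hs hps, mCoef_eq hq hr hqr]
          exact (Nat.coprime_primes Nat.prime_two hq).mpr (Ne.symm hq2)
        · rw [hF_def, mCoef_eq_one hB]
          exact Nat.coprime_one_right _
      · rw [hE_def, mCoef_eq_one hA]
        exact Nat.coprime_one_left _
    exact Nat.Coprime.mul_dvd_of_dvd_of_dvd hco hEg hFg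
  exact Nat.dvd_antisymm hdir1 hdir2

lemma finset_gcd_nonneg {ι : Type*} (s : Finset ι) (f : ι → ℤ) : 0 ≤ s.gcd f := by
  classical
  induction s using Finset.induction_on with
  | empty => simp
  | insert h ih =>
    rw [Finset.gcd_insert, ← Int.coe_gcd]
    exact Int.natCast_nonneg _

theorem gcd_choose_diff (k : ℕ) (hk : 1 < k) :
    (Finset.Icc 1 k).gcd
        (fun i => ((2 * k + 1).choose (2 * i) : ℤ) - (2 * k + 1).choose (2 * i - 1)) =
      (mCoef (2 * k + 1) : ℤ) * mCoef (2 * k) := by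
  set a : ℕ → ℤ := fun i => ((2 * k + 1).choose (2 * i) : ℤ) - (2 * k + 1).choose (2 * i - 1)
    with ha_def
  set c : ℕ → ℤ := fun j => ((2 * k).choose (2 * j) : ℤ) - 1 with hc_def
  have hc0 : c 0 = 0 := by simp [hc_def]
  have hstep : ∀ i : ℕ, 1 ≤ i → a i = c i - c (i - 1) := by
    intro i hi
    obtain ⟨i', rfl⟩ : ∃ i', i = i' + 1 := ⟨i - 1, by omega⟩
    have e1 : (2 * k + 1).choose (2 * (i' + 1)) =
        (2 * k).choose (2 * i' + 1) + (2 * k).choose (2 * i' + 1 + 1) := by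
      have h1 : 2 * (i' + 1) = (2 * i' + 1) + 1 := by ring
      rw [h1]
      exact Nat.choose_succ_succ' _ _
    have e2 : (2 * k + 1).choose (2 * (i' + 1) - 1) =
        (2 * k).choose (2 * i') + (2 * k).choose (2 * i' + 1) := by
      have h2 : 2 * (i' + 1) - 1 = (2 * i') + 1 := by omega
      rw [h2]
      exact Nat.choose_succ_succ' _ _
    have e3 : 2 * (i' + 1) = 2 * i' + 1 + 1 := by ring
    have e4 : i' + 1 - 1 = i' := by omega
    simp only [ha_def, hc_def]
    rw [e2, e1, e3, e4]
    push_cast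
    ring
  have hmem0 : (1 : ℕ) ∈ Finset.Icc 1 k := by rw [Finset.mem_Icc]; omega
  have hdvdc : ∀ i, i ≤ k → (Finset.Icc 1 k).gcd a ∣ c i := by
    intro i
    induction i with
    | zero => intro _; rw [hc0]; exact dvd_zero _
    | succ i ih =>
      intro hle
      have h1 : (Finset.Icc 1 k).gcd a ∣ a (i+1) :=
        Finset.gcd_dvd (by rw [Finset.mem_Icc]; omega)
      have h2 := ih (by omega)
      have e : c (i+1) = a (i+1) + c i := by
        rw [hstep (i+1) (by omega)]
        simp
      rw [e]
      exact dvd_add h1 h2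
  have hgcd1 : (Finset.Icc 1 k).gcd a = (Finset.Icc 1 k).gcd c := by
    apply Int.dvd_antisymm (finset_gcd_nonneg _ _) (finset_gcd_nonneg _ _)
    · apply Finset.dvd_gcd
      intro j hj
      rw [Finset.mem_Icc] at hj
      exact hdvdc j hj.2
    · apply Finset.dvd_gcd
      intro i hi
      rw [Finset.mem_Icc] at hi
      rw [hstep i hi.1]
      apply _root_.dvd_sub
      · exact Finset.gcd_dvd (by rw [Finset.mem_Icc]; omega)
      · rcases Nat.lt_or_ge (i-1) 1 with h | h
        · have : i - 1 = 0 := by omega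
          rw [this, hc0]
          exact dvd_zero _
        · exact Finset.gcd_dvd (by rw [Finset.mem_Icc]; omega)
  have hgcd2 : (Finset.Icc 1 k).gcd c
      = (((Finset.Icc 1 k).gcd (fun i => (2*k).choose (2*i) - 1) : ℕ) : ℤ) := by
    rw [← finset_gcd_cast]
    apply Finset.gcd_congr rfl
    intro j hj
    simp only [hc_def]
    rw [Nat.cast_sub (Nat.choose_pos (by rw [Finset.mem_Icc] at hj; omega))]
    push_cast
    rfl
  rw [hgcd1, hgcd2, nat_gcd_value hk]
  push_cast
  ring
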